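/- Let R be a commutative Noetherian ring and M a finitely generated module with finite projective dimension. If M has Gorenstein dimension 0 (i.e., M is reflexive and Ext^i(M,R) = Ext^i(M*,R) = 0 for all i ≥ 1), then M is projective. -/

import Mathlib

open CategoryTheory

universe u

variable (R : Type u) [CommRing R]

/-- The `i`-th Ext module of two modules, as an object of `ModuleCat R`. -/
noncomputable def extM (M N : ModuleCat.{u} R) (i : ℕ) : ModuleCat.{u} R :=
  ((Ext R (ModuleCat.{u} R) i).obj (Opposite.op M)).obj N

/-- `D` is an Auslander dual of `M`: `D ≅ Coker(u* : P0* → P1*)` for some finite projective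
presentation `P1 →u P0 → M → 0`. -/
def IsAuslanderDual (M D : ModuleCat.{u} R) : Prop :=
  ∃ (P1 P0 : ModuleCat.{u} R) (uu : P1 →ₗ[R] P0) (f : P0 →ₗ[R] M),
    Module.Finite R P1 ∧ Module.Projective R P1 ∧
    Module.Finite R P0 ∧ Module.Projective R P0 ∧
    Function.Surjective f ∧ Function.Exact uu f ∧
    Nonempty (D ≃ₗ[R] (Module.Dual R P1 ⧸ LinearMap.range uu.dualMap))

/-- Gorenstein dimension zero: reflexive with all positive Ext of `M` and `M*` into `R`
vanishing. -/
def GdimZero (M : ModuleCat.{u} R) : Prop :=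
  Module.IsReflexive R M ∧ ∀ i : ℕ, 1 ≤ i →
    Subsingleton (extM R M (ModuleCat.of R R) i) ∧
    Subsingleton (extM R (ModuleCat.of R (Module.Dual R M)) (ModuleCat.of R R) i)

/-- `GdimLE R k M` : the Gorenstein dimension of `M` is at most `k`. -/
def GdimLE : ℕ → ModuleCat.{u} R → Prop
  | 0, M => GdimZero R M
  | (k+1), M => ∃ (N : ModuleCat.{u} R) (f : N →ₗ[R] M),
      Function.Surjective f ∧ GdimZero R N ∧
      GdimLE k (ModuleCat.of R (LinearMap.ker f))

/-- The Gorenstein dimension, as an extended natural number. -/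
noncomputable def gdim (M : ModuleCat.{u} R) : ℕ∞ :=
  sInf {n : ℕ∞ | ∃ k : ℕ, n = k ∧ GdimLE R k M}

/-- `PdLE R k M` : projective dimension at most `k` (via finite projective resolutions). -/
def PdLE : ℕ → ModuleCat.{u} R → Prop
  | 0, M => Module.Projective R M
  | (k+1), M => ∃ (P : ModuleCat.{u} R) (f : P →ₗ[R] M),
      Module.Finite R P ∧ Module.Projective R P ∧ Function.Surjective f ∧
      PdLE k (ModuleCat.of R (LinearMap.ker f))

noncomputable def pd (M : ModuleCat.{u} R) : ℕ∞ :=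
  sInf {n : ℕ∞ | ∃ k : ℕ, n = k ∧ PdLE R k M}

/-- `M` is a `k`-th syzygy: there is an exact sequence `0 → M → P₀ → ⋯ → P_{k-1}` with all
`P_j` finitely generated projective. -/
def IsSyzygy : ℕ → ModuleCat.{u} R → Prop
  | 0, _ => True
  | (k+1), M => ∃ (P : ModuleCat.{u} R) (f : M →ₗ[R] P),
      Module.Finite R P ∧ Module.Projective R P ∧ Function.Injective f ∧
      IsSyzygy k (ModuleCat.of R (P ⧸ LinearMap.range f))

/-- `M` is `k`-torsionless: `Ext^i(D(M), R) = 0` for `1 ≤ i ≤ k`. -/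
def Torsionless (k : ℕ) (M : ModuleCat.{u} R) : Prop :=
  ∃ D : ModuleCat.{u} R, IsAuslanderDual R M D ∧
    ∀ i : ℕ, 1 ≤ i → i ≤ k → Subsingleton (extM R D (ModuleCat.of R R) i)

/-- The depth of a module over a local ring, via vanishing of `Ext^i(k, M)`. -/
noncomputable def rdepth (A : Type u) [CommRing A] [IsLocalRing A] (N : ModuleCat.{u} A) : ℕ∞ :=
  sInf {n : ℕ∞ | ∃ i : ℕ, n = i ∧
    ¬ Subsingleton (extM A (ModuleCat.of A (IsLocalRing.ResidueField A)) N i)}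

/-- Injective dimension at most `k`. -/
def IdLE : ℕ → ModuleCat.{u} R → Prop
  | 0, M => Module.Injective R M
  | (k+1), M => ∃ (I : ModuleCat.{u} R) (f : M →ₗ[R] I),
      Module.Injective R I ∧ Function.Injective f ∧
      IdLE k (ModuleCat.of R (I ⧸ LinearMap.range f))


section AuxProof
variable {R}

section Glue
variable (K P M : ModuleCat.{u} R) (i : K ⟶ P) (f : P ⟶ M)

noncomputable def gluedX (Q : ProjectiveResolution K) : ℕ → ModuleCat.{u} R
  | 0 => P
  | (n+1) => Q.complex.X n

noncomputable def qpi (Q : ProjectiveResolution K) : Q.complex.X 0 ⟶ K :=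
  Q.π.f 0 ≫ (HomologicalComplex.singleObjXSelf (ComplexShape.down ℕ) 0 K).hom

instance (Q : ProjectiveResolution K) : Epi (qpi K Q) := by
  unfold qpi; infer_instance

lemma qpi_surjective (Q : ProjectiveResolution K) : Function.Surjective (qpi K Q) :=
  (ModuleCat.epi_iff_surjective _).1 inferInstance

lemma qpi_d (Q : ProjectiveResolution K) : Q.complex.d 1 0 ≫ qpi K Q = 0 := by
  rw [qpi, ← Category.assoc, Q.complex_d_comp_π_f_zero, Limits.zero_comp]

lemma qpi_exact (Q : ProjectiveResolution K) :
    (ShortComplex.mk (Q.complex.d 1 0) (qpi K Q) (qpi_d K Q)).Exact := by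
  have h := Q.exact₀
  exact (ShortComplex.exact_iff_of_iso (ShortComplex.isoMk (Iso.refl _) (Iso.refl _)
    (HomologicalComplex.singleObjXSelf (ComplexShape.down ℕ) 0 K)
    (by simp) (by simp [qpi]))).1 h

noncomputable def gluedD (Q : ProjectiveResolution K) :
    ∀ n : ℕ, gluedX K P Q (n+1) ⟶ gluedX K P Q n
  | 0 => qpi K Q ≫ i
  | (n+1) => Q.complex.d (n+1) n

noncomputable def gluedComplex (Q : ProjectiveResolution K) : ChainComplex (ModuleCat.{u} R) ℕ :=
  ChainComplex.of (gluedX K P Q) (gluedD K P i Q) (by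
    rintro (_|n)
    · show Q.complex.d 1 0 ≫ (qpi K Q ≫ i) = 0
      rw [← Category.assoc, qpi_d, Limits.zero_comp]
    · show Q.complex.d (n+2) (n+1) ≫ Q.complex.d (n+1) n = 0
      simp)

@[simp] lemma gluedComplex_d_one_zero (Q : ProjectiveResolution K) :
    (gluedComplex K P i Q).d 1 0 = qpi K Q ≫ i :=
  ChainComplex.of_d (gluedX K P Q) (gluedD K P i Q) 0

@[simp] lemma gluedComplex_d_succ (Q : ProjectiveResolution K) (n : ℕ) :
    (gluedComplex K P i Q).d (n+2) (n+1) = Q.complex.d (n+1) n :=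
  ChainComplex.of_d _ _ (n+1)

lemma glued_comp_zero (hex : LinearMap.range i.hom = LinearMap.ker f.hom) (Q : ProjectiveResolution K) :
    (gluedComplex K P i Q).d 1 0 ≫ f = 0 := by
  erw [gluedComplex_d_one_zero, Category.assoc]
  ext x
  have : i (qpi K Q x) ∈ LinearMap.ker f.hom := hex ▸ LinearMap.mem_range_self i.hom _
  exact this

noncomputable def gluedRes [Projective P] (hi : Function.Injective i)
    (hf : Function.Surjective f) (hex : LinearMap.range i.hom = LinearMap.ker f.hom)
    (Q : ProjectiveResolution K) : ProjectiveResolution M where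
  complex := gluedComplex K P i Q
  projective n := by
    cases n with
    | zero => exact ‹Projective P›
    | succ n => exact Q.projective n
  π := (ChainComplex.toSingle₀Equiv _ _).symm ⟨f, glued_comp_zero K P M i f hex Q⟩
  quasiIso := ⟨fun n => by
    cases n with
    | zero =>
      rw [ChainComplex.quasiIsoAt₀_iff, ShortComplex.quasiIso_iff_of_zeros' _ rfl rfl rfl]
      have htau : ((HomologicalComplex.shortComplexFunctor' (ModuleCat.{u} R)
          (ComplexShape.down ℕ) 1 0 0).map
          ((ChainComplex.toSingle₀Equiv (gluedComplex K P i Q) M).symm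
            ⟨f, glued_comp_zero K P M i f hex Q⟩)).τ₂ = f :=
        ChainComplex.toSingle₀Equiv_symm_apply_f_zero _ _
      refine ⟨?_, ?_⟩
      · rw [ShortComplex.moduleCat_exact_iff]
        intro x hx
        have hfx : f x = 0 := by rw [← htau]; exact hx
        obtain ⟨k, hk⟩ : (x : P) ∈ LinearMap.range i.hom := by
          rw [hex]; exact hfx
        obtain ⟨y, hy⟩ := qpi_surjective K Q k
        refine ⟨y, ?_⟩
        have h1 := ConcreteCategory.congr_hom (gluedComplex_d_one_zero K P i Q) y
        refine h1.trans ?_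
        show i (qpi K Q y) = x
        rw [hy, hk]
      · rw [htau]
        exact (ModuleCat.epi_iff_surjective f).2 hf
    | succ n =>
      rw [quasiIsoAt_iff_exactAt' _ _ (ChainComplex.exactAt_succ_single_obj _ _),
        HomologicalComplex.exactAt_iff' _ (n+2) (n+1) n (by simp) (by simp),
        ShortComplex.moduleCat_exact_iff]
      cases n with
      | zero =>
        intro x hx
        have hx0 : ((gluedComplex K P i Q).d 1 0) x = 0 := hx
        have h1 := ConcreteCategory.congr_hom (gluedComplex_d_one_zero K P i Q) x
        have h0 : i (qpi K Q x) = 0 := h1.symm.trans hx0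
        have h2 : qpi K Q x = 0 := by
          apply hi; rw [h0, map_zero]
        obtain ⟨y, hy⟩ := (ShortComplex.moduleCat_exact_iff _).1 (qpi_exact K Q) x h2
        refine ⟨y, ?_⟩
        have h3 := ConcreteCategory.congr_hom (gluedComplex_d_succ K P i Q 0) y
        exact h3.trans hy
      | succ n =>
        intro x hx
        have hx0 : ((gluedComplex K P i Q).d (n+2) (n+1)) x = 0 := hx
        have h1 := ConcreteCategory.congr_hom (gluedComplex_d_succ K P i Q n) x
        have hx1 : (Q.complex.d (n+1) n) x = 0 := h1.symm.trans hx0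
        obtain ⟨y, hy⟩ := (ShortComplex.moduleCat_exact_iff _).1 (Q.exact_succ n) x hx1
        refine ⟨y, ?_⟩
        have h3 := ConcreteCategory.congr_hom (gluedComplex_d_succ K P i Q (n+1)) y
        exact h3.trans hy⟩

lemma subsingleton_of_iso' {X Y : ModuleCat.{u} R} (e : X ≅ Y) (h : Subsingleton X) :
    Subsingleton Y := by
  refine ⟨fun a b => ?_⟩
  have ha : e.hom (e.inv a) = a := ConcreteCategory.congr_hom e.inv_hom_id a
  have hb : e.hom (e.inv b) = b := ConcreteCategory.congr_hom e.inv_hom_id b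
  rw [← ha, ← hb, Subsingleton.elim (e.inv a) (e.inv b)]

lemma linearYonedaObj_d_apply (X : ChainComplex (ModuleCat.{u} R) ℕ) (Y : ModuleCat.{u} R)
    (a b : ℕ) (v : X.X a ⟶ Y) : (X.linearYonedaObj R Y).d a b v = X.d b a ≫ v := rfl

lemma extend_of_ext_one_subsingleton [Projective P] (Y : ModuleCat.{u} R)
    (hi : Function.Injective i) (hf : Function.Surjective f)
    (hex : LinearMap.range i.hom = LinearMap.ker f.hom)
    (hsub : Subsingleton (((Ext R (ModuleCat.{u} R) 1).obj (Opposite.op M)).obj Y))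
    (g : K ⟶ Y) : ∃ h : P ⟶ Y, i ≫ h = g := by
  let Q : ProjectiveResolution K := ProjectiveResolution.of K
  let O : ProjectiveResolution M := gluedRes K P M i f hi hf hex Q
  let D := O.complex.linearYonedaObj R Y
  have h1 : Subsingleton (D.homology 1) :=
    subsingleton_of_iso' (O.isoExt 1 Y) hsub
  have h2 : Subsingleton ((D.sc' 0 1 2).homology) :=
    subsingleton_of_iso' (HomologicalComplex.homologyIsoSc' D 0 1 2 (by simp) (by simp)) h1
  have hexact : (D.sc' 0 1 2).Exact := by
    rw [ShortComplex.exact_iff_isZero_homology]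
    exact ModuleCat.isZero_of_subsingleton _
  rw [ShortComplex.moduleCat_exact_iff] at hexact
  -- the element of D.X 1 = (O.complex.X 1 ⟶ Y)
  let v : (D.sc' 0 1 2).X₂ := (qpi K Q ≫ g : Q.complex.X 0 ⟶ Y)
  have hv : (D.sc' 0 1 2).g v = 0 := by
    show (D.d 1 2) v = 0
    have : (D.d 1 2) v = O.complex.d 2 1 ≫ (qpi K Q ≫ g) := rfl
    rw [this]
    have h3 : O.complex.d 2 1 = Q.complex.d 1 0 := gluedComplex_d_succ K P i Q 0
    rw [h3]; erw [← Category.assoc, qpi_d, Limits.zero_comp]; rfl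
  obtain ⟨w, hw⟩ := hexact v hv
  refine ⟨(w : P ⟶ Y), ?_⟩
  have hw' : O.complex.d 1 0 ≫ (w : P ⟶ Y) = qpi K Q ≫ g := hw
  have h4 : O.complex.d 1 0 = qpi K Q ≫ i := gluedComplex_d_one_zero K P i Q
  rw [h4] at hw'; erw [Category.assoc] at hw'
  exact (cancel_epi (qpi K Q)).1 hw'

lemma shift_subsingleton [Projective P] (Y : ModuleCat.{u} R)
    (hi : Function.Injective i) (hf : Function.Surjective f)
    (hex : LinearMap.range i.hom = LinearMap.ker f.hom) (n : ℕ)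
    (hsub : Subsingleton (((Ext R (ModuleCat.{u} R) (n+2)).obj (Opposite.op M)).obj Y)) :
    Subsingleton (((Ext R (ModuleCat.{u} R) (n+1)).obj (Opposite.op K)).obj Y) := by
  let Q : ProjectiveResolution K := ProjectiveResolution.of K
  let O : ProjectiveResolution M := gluedRes K P M i f hi hf hex Q
  let DM := O.complex.linearYonedaObj R Y
  let DK := Q.complex.linearYonedaObj R Y
  have h1 : Subsingleton (DM.homology (n+2)) :=
    subsingleton_of_iso' (O.isoExt (n+2) Y) hsub
  have h2 : Subsingleton ((DM.sc' (n+1) (n+2) (n+3)).homology) :=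
    subsingleton_of_iso' (HomologicalComplex.homologyIsoSc' DM (n+1) (n+2) (n+3)
      (by simp) (by simp)) h1
  have e : (DM.sc' (n+1) (n+2) (n+3)) ≅ (DK.sc' n (n+1) (n+2)) := by
    refine ShortComplex.isoMk (Iso.refl _) (Iso.refl _) (Iso.refl _) ?_ ?_
    · simp only [Iso.refl_hom, Category.id_comp, Category.comp_id]
      show (ModuleCat.ofHom (Linear.leftComp R Y (Q.complex.d (n+1) n))) =
        (ModuleCat.ofHom (Linear.leftComp R Y ((gluedComplex K P i Q).d (n+2) (n+1))))
      rw [gluedComplex_d_succ K P i Q n]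
      rfl
    · simp only [Iso.refl_hom, Category.id_comp, Category.comp_id]
      show (ModuleCat.ofHom (Linear.leftComp R Y (Q.complex.d (n+2) (n+1)))) =
        (ModuleCat.ofHom (Linear.leftComp R Y ((gluedComplex K P i Q).d (n+3) (n+2))))
      rw [show (gluedComplex K P i Q).d (n+3) (n+2) = Q.complex.d (n+2) (n+1) from
        gluedComplex_d_succ K P i Q (n+1)]
      rfl
  have h3 : Subsingleton ((DK.sc' n (n+1) (n+2)).homology) :=
    subsingleton_of_iso' (ShortComplex.homologyMapIso e) h2
  have h4 : Subsingleton (DK.homology (n+1)) :=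
    subsingleton_of_iso' (HomologicalComplex.homologyIsoSc' DK n (n+1) (n+2)
      (by simp) (by simp)).symm h3
  exact subsingleton_of_iso' (Q.isoExt (n+1) Y).symm h4
end Glue

lemma main_ind [IsNoetherianRing R] :
    ∀ (n : ℕ) (M : ModuleCat.{u} R), Module.Finite R M → PdLE R n M →
      (∀ j : ℕ, 1 ≤ j → Subsingleton (extM R M (ModuleCat.of R R) j)) →
      Module.Projective R M := by
  intro n
  induction n with
  | zero => intro M _ h _; exact h
  | succ n IH =>
    intro M hMfin hpd hext
    obtain ⟨P, f, hPfin, hPproj, hfs, hk⟩ := hpd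
    haveI : Module.Finite R P := hPfin
    let Kc : ModuleCat.{u} R := ModuleCat.of R (LinearMap.ker f)
    let i : Kc ⟶ P := ModuleCat.ofHom (LinearMap.ker f).subtype
    have hi : Function.Injective i := Submodule.injective_subtype _
    have hex : LinearMap.range i.hom = LinearMap.ker f := Submodule.range_subtype _
    haveI hPp : Projective P := by
      have := (IsProjective.iff_projective (R := R) (P := P)).1 hPproj
      exact this
    haveI hKfin : Module.Finite R Kc := by
      show Module.Finite R (LinearMap.ker f)
      infer_instance
    -- Ext vanishing for K
    have hextK : ∀ j : ℕ, 1 ≤ j → Subsingleton (extM R Kc (ModuleCat.of R R) j) := by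
      intro j hj
      obtain ⟨m, rfl⟩ := Nat.exists_eq_add_of_le' hj
      show Subsingleton (((Ext R (ModuleCat.{u} R) (m+1)).obj (Opposite.op Kc)).obj
        (ModuleCat.of R R))
      exact shift_subsingleton Kc P M i (ModuleCat.ofHom f) (ModuleCat.of R R) hi hfs hex m
        (hext (m+2) (by omega))
    have hKproj : Module.Projective R Kc := IH Kc hKfin hk hextK
    haveI : Module.Projective R (LinearMap.ker f) := hKproj
    -- K is a retract of a finite free module
    obtain ⟨m, p, hp⟩ := Module.Finite.exists_fin' R Kc
    obtain ⟨σ, hσ⟩ := Module.projective_lifting_property p (LinearMap.id (R := R) (M := Kc)) hp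
    -- extend σ : K →ₗ R^m along i, coordinatewise
    have hextend : ∀ g : Kc →ₗ[R] (Fin m → R), ∃ h : P →ₗ[R] (Fin m → R),
        h ∘ₗ (LinearMap.ker f).subtype = g := by
      intro g
      have hcoord : ∀ jj : Fin m, ∃ h : P ⟶ ModuleCat.of R R,
          i ≫ h = ModuleCat.ofHom ((LinearMap.proj jj).comp g : Kc →ₗ[R] R) := by
        intro jj
        exact extend_of_ext_one_subsingleton Kc P M i (ModuleCat.ofHom f) (ModuleCat.of R R) hi hfs hex
          (hext 1 le_rfl) (ModuleCat.ofHom ((LinearMap.proj jj).comp g))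
      choose hh hhc using hcoord
      refine ⟨LinearMap.pi (fun jj => (hh jj).hom), ?_⟩
      ext x jj
      have := ConcreteCategory.congr_hom (hhc jj) x
      exact this
    obtain ⟨hσ', hσ'c⟩ := hextend σ
    -- retraction r : P →ₗ K with r ∘ subtype = id
    let r : P →ₗ[R] Kc := p ∘ₗ hσ'
    have hr : ∀ k : Kc, r ((LinearMap.ker f).subtype k) = k := by
      intro k
      show p (hσ' ((LinearMap.ker f).subtype k)) = k
      have h5 : hσ' ((LinearMap.ker f).subtype k) = σ k := DFunLike.congr_fun hσ'c k
      rw [h5]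
      exact DFunLike.congr_fun hσ k
    -- splitting
    let q : P →ₗ[R] P := LinearMap.id - (LinearMap.ker f).subtype ∘ₗ r
    have hle : LinearMap.ker f ≤ LinearMap.ker q := by
      intro x hx
      have : q x = x - (LinearMap.ker f).subtype (r ((LinearMap.ker f).subtype ⟨x, hx⟩)) := rfl
      rw [LinearMap.mem_ker, this, hr ⟨x, hx⟩]
      simp
    let e := f.quotKerEquivOfSurjective hfs
    let σM : M →ₗ[R] P := ((LinearMap.ker f).liftQ q hle) ∘ₗ (e.symm : M →ₗ[R] _)
    have hsec : ∀ x : P, σM (f x) = q x := by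
      intro x
      have he : e (Submodule.Quotient.mk x) = f x := rfl
      have : e.symm (f x) = Submodule.Quotient.mk x := by
        rw [LinearEquiv.symm_apply_eq, he]
      show ((LinearMap.ker f).liftQ q hle) (e.symm (f x)) = q x
      rw [this, Submodule.liftQ_apply]
    have hsplit : (f : P →ₗ[R] M) ∘ₗ σM = LinearMap.id := by
      ext y
      obtain ⟨x, rfl⟩ := hfs y
      show f (σM (f x)) = f x
      rw [hsec]
      show f (x - (LinearMap.ker f).subtype (r x)) = f x
      rw [map_sub]
      have : f ((LinearMap.ker f).subtype (r x)) = 0 := (r x).2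
      rw [this, sub_zero]
    exact Module.Projective.of_split σM f hsplit

end AuxProof

/-- A module of finite projective dimension and Gorenstein dimension zero is projective. -/
theorem projective_of_gdimZero_of_finite_pd
    (R : Type u) [CommRing R] [IsNoetherianRing R]
    (M : ModuleCat.{u} R) [Module.Finite R M]
    (hpd : ∃ n : ℕ, PdLE R n M) (hG : GdimZero R M) :
    Module.Projective R M := by
  obtain ⟨n, hn⟩ := hpd
  exact main_ind n M ‹_› hn (fun j hj => (hG.2 j hj).1)
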